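/- Let G be a compact topological group, B a complete Hausdorff topological field of characteristic zero, K a subfield, and V a finite-dimensional K-vector space. Give V(B ⊗_K R) := V ⊗_K (B ⊗_K R) the inductive limit topology as a B-vector space. Then for any K-algebra R and any n ≥ 0, the natural map Cⁿ(G, V ⊗_K B) ⊗_K R → Cⁿ(G, V ⊗_K B ⊗_K R) from continuous cochains with values in V ⊗ B, tensored with R, to continuous cochains with values in V ⊗ B ⊗ R, is a bijection. -/

import Mathlib

open scoped TensorProduct

/-- The canonical topology on a finite-dimensional vector space over a
topological field. -/
noncomputable def canonicalFDTopology (B V : Type*) [Field B] [TopologicalSpace B]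
    [AddCommGroup V] [Module B V] [FiniteDimensional B V] : TopologicalSpace V :=
  TopologicalSpace.induced (Module.finBasis B V).equivFun Pi.topologicalSpace

/-- The inductive limit topology on a `B`-vector space coming from its
finite-dimensional subspaces. -/
noncomputable def indLimTopology (B R : Type*) [Field B] [TopologicalSpace B]
    [AddCommGroup R] [Module B R] : TopologicalSpace R :=
  ⨆ (V : Submodule B R) (h : FiniteDimensional B V),
    TopologicalSpace.coinduced (Subtype.val : V → R) (@canonicalFDTopology B V _ _ _ _ h)

/-- Given a bilinear map `μ : M → N → P`, the induced linear map
`(X → M) ⊗ N → (X → P)`, `c ⊗ r ↦ (x ↦ μ (c x) r)`. -/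
noncomputable def pointwiseTensorMap (K : Type*) [CommRing K] (X : Type*)
    {M N P : Type*} [AddCommGroup M] [Module K M] [AddCommGroup N] [Module K N]
    [AddCommGroup P] [Module K P] (μ : M →ₗ[K] N →ₗ[K] P) :
    ((X → M) ⊗[K] N) →ₗ[K] (X → P) :=
  TensorProduct.lift <| LinearMap.mk₂ K (fun c r x => μ (c x) r)
    (fun c c' r => by funext x; simp)
    (fun s c r => by funext x; simp)
    (fun c r r' => by funext x; simp)
    (fun c r r' => by funext x; simp)

section Aux
variable {B : Type*} [Field B] [TopologicalSpace B] [IsTopologicalRing B]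

/-- Linear maps between finite-dimensional spaces are continuous for the canonical topology. -/
theorem aux_fd_continuous {M N : Type*} [AddCommGroup M] [Module B M] [FiniteDimensional B M]
    [AddCommGroup N] [Module B N] [FiniteDimensional B N] (φ : M →ₗ[B] N) :
    @Continuous M N (canonicalFDTopology B M) (canonicalFDTopology B N) φ := by
  letI tM : TopologicalSpace M := canonicalFDTopology B M
  letI tN : TopologicalSpace N := canonicalFDTopology B N
  let e := (Module.finBasis B M).equivFun
  let e' := (Module.finBasis B N).equivFun
  apply continuous_induced_rng.2
  have : (⇑e' ∘ ⇑φ) = ⇑(e'.toLinearMap ∘ₗ φ ∘ₗ e.symm.toLinearMap) ∘ ⇑e := by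
    funext x
    simp only [Function.comp_apply, LinearMap.coe_comp, LinearEquiv.coe_coe,
      LinearEquiv.symm_apply_apply]
  rw [this]
  exact ((e'.toLinearMap ∘ₗ φ ∘ₗ e.symm.toLinearMap).continuous_on_pi).comp
    continuous_induced_dom

theorem aux_fd_add_continuous {M : Type*} [AddCommGroup M] [Module B M]
    [FiniteDimensional B M] :
    @Continuous (M × M) M (@instTopologicalSpaceProd M M (canonicalFDTopology B M) (canonicalFDTopology B M))
      (canonicalFDTopology B M) (fun p => p.1 + p.2) := by
  letI tM : TopologicalSpace M := canonicalFDTopology B M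
  let e := (Module.finBasis B M).equivFun
  apply continuous_induced_rng.2
  have : (⇑e ∘ fun p : M × M => p.1 + p.2) = fun p : M × M => e p.1 + e p.2 := by
    funext p; simp [e]
  rw [this]
  exact ((continuous_induced_dom.comp continuous_fst).add
    (continuous_induced_dom.comp continuous_snd))

theorem aux_fd_t2 [T2Space B] {M : Type*} [AddCommGroup M] [Module B M]
    [FiniteDimensional B M] : @T2Space M (canonicalFDTopology B M) := by
  letI tM : TopologicalSpace M := canonicalFDTopology B M
  let e := (Module.finBasis B M).equivFun
  constructor
  intro x y hxy
  obtain ⟨u, v, hu, hv, hxu, hyv, huv⟩ := t2_separation (show e x ≠ e y by simpa using hxy)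
  exact ⟨⇑e ⁻¹' u, ⇑e ⁻¹' v, continuous_induced_dom.isOpen_preimage u hu,
    continuous_induced_dom.isOpen_preimage v hv, hxu, hyv, huv.preimage ⇑e⟩

end Aux

set_option linter.unusedSectionVars false

section Aux2
variable {B : Type*} [Field B] [TopologicalSpace B] [IsTopologicalRing B]
variable {M : Type*} [AddCommGroup M] [Module B M]

theorem aux_incl_continuous (p : Submodule B M) [h : FiniteDimensional B p] :
    @Continuous p M (canonicalFDTopology B p) (indLimTopology B M) Subtype.val := by
  rw [@continuous_iff_coinduced_le]
  exact le_iSup_of_le p (le_iSup_of_le h le_rfl)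

theorem aux_proj_continuous (p : Submodule B M) [h : FiniteDimensional B p]
    (π : M →ₗ[B] p) :
    @Continuous M p (indLimTopology B M) (canonicalFDTopology B p) π := by
  unfold indLimTopology
  rw [continuous_iSup_dom]
  intro q
  rw [continuous_iSup_dom]
  intro hq
  haveI := hq
  rw [continuous_coinduced_dom]
  exact aux_fd_continuous (π.comp q.subtype)

theorem aux_corestrict_continuous {X : Type*} [TopologicalSpace X] {f : X → M}
    (hf : @Continuous X M _ (indLimTopology B M) f) (p : Submodule B M)
    [h : FiniteDimensional B p] (hr : ∀ x, f x ∈ p) :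
    @Continuous X p _ (canonicalFDTopology B p) (fun x => (⟨f x, hr x⟩ : p)) := by
  obtain ⟨q, hq⟩ := Submodule.exists_isCompl p
  let π := Submodule.linearProjOfIsCompl p q hq
  have h2 : @Continuous X p _ (canonicalFDTopology B p) (⇑π ∘ f) :=
    @Continuous.comp X M ↥p _ (indLimTopology B M) (canonicalFDTopology B p) f ⇑π
      (aux_proj_continuous p π) hf
  have key : (fun x => (⟨f x, hr x⟩ : p)) = ⇑π ∘ f := by
    funext x
    exact (Submodule.linearProjOfIsCompl_apply_left hq ⟨f x, hr x⟩).symm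
  rw [key]
  exact h2
end Aux2

section Aux3
variable {B : Type*} [Field B] [TopologicalSpace B] [IsTopologicalRing B] [T2Space B]
variable {M : Type*} [AddCommGroup M] [Module B M]

theorem aux_closed_of_fd_finite {S : Set M}
    (hS : ∀ (p : Submodule B M), FiniteDimensional B p →
      (Subtype.val ⁻¹' S : Set p).Finite) :
    @IsClosed M (indLimTopology B M) S := by
  have hopen : @IsOpen M (indLimTopology B M) Sᶜ := by
    refine isOpen_iSup_iff.mpr fun p => isOpen_iSup_iff.mpr fun hp => ?_
    haveI := hp
    refine isOpen_coinduced.mpr ?_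
    letI : TopologicalSpace p := canonicalFDTopology B p
    haveI : T2Space p := aux_fd_t2
    have heq : (Subtype.val ⁻¹' Sᶜ : Set p) = (Subtype.val ⁻¹' S : Set p)ᶜ := rfl
    rw [heq, isOpen_compl_iff]
    exact (hS p hp).isClosed
  exact @IsClosed.mk M (indLimTopology B M) S hopen

theorem aux_range_fd {X : Type*} [TopologicalSpace X] [CompactSpace X]
    {f : X → M} (hf : @Continuous X M _ (indLimTopology B M) f) :
    ∃ p : Submodule B M, FiniteDimensional B p ∧ ∀ x, f x ∈ p := by
  classical
  by_contra hcon
  push_neg at hcon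
  have H : ∀ p : Submodule B M, FiniteDimensional B p → ∃ x : X, f x ∉ p := fun p hp => by
    obtain ⟨x, hx⟩ := hcon p hp
    exact ⟨x, hx⟩
  choose pick hpick using H
  let g : ℕ → {p : Submodule B M // FiniteDimensional B p} := fun n =>
    Nat.rec ⟨⊥, inferInstance⟩
      (fun _ q => ⟨q.1 ⊔ Submodule.span B {f (pick q.1 q.2)}, by
        haveI := q.2
        infer_instance⟩) n
  let a : ℕ → M := fun n => f (pick (g n).1 (g n).2)
  have hgsucc : ∀ n, (g (n + 1)).1 = (g n).1 ⊔ Submodule.span B {a n} := fun n => rfl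
  have hnot : ∀ n, a n ∉ (g n).1 := fun n => hpick _ _
  have hmem : ∀ n, a n ∈ (g (n + 1)).1 := fun n => by
    rw [hgsucc]
    exact Submodule.mem_sup_right (Submodule.mem_span_singleton_self _)
  have hmono : ∀ {k n : ℕ}, k ≤ n → (g k).1 ≤ (g n).1 := by
    intro k n h
    induction h with
    | refl => exact le_rfl
    | step _ ih =>
        refine ih.trans ?_
        rw [hgsucc]
        exact le_sup_left
  have hainj : Function.Injective a := by
    have key : ∀ {k l : ℕ}, k < l → a k ≠ a l := by
      intro k l hkl heq
      exact hnot l (heq ▸ hmono (Nat.succ_le_of_lt hkl) (hmem k))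
    intro k l heq
    rcases lt_trichotomy k l with h | h | h
    · exact absurd heq (key h)
    · exact h
    · exact absurd heq.symm (key h)
  -- finiteness of indices landing in a finite-dimensional subspace
  have hfin : ∀ (p : Submodule B M), FiniteDimensional B p → {n : ℕ | a n ∈ p}.Finite := by
    intro p hp
    haveI := hp
    by_contra hinf
    replace hinf : {n : ℕ | a n ∈ p}.Infinite := hinf
    let W : ℕ → Submodule B M := fun n => (g n).1 ⊓ p
    haveI hWfd : ∀ n, FiniteDimensional B (W n) := fun n =>
      Submodule.finiteDimensional_of_le (inf_le_right : W n ≤ p)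
    have hcard : ∀ n : ℕ,
        ((Finset.range n).filter (fun k => a k ∈ p)).card ≤ Module.finrank B (W n) := by
      intro n
      induction n with
      | zero => simp
      | succ n ih =>
          haveI := hWfd n
          haveI := hWfd (n + 1)
          rw [Finset.range_add_one, Finset.filter_insert]
          by_cases hmemp : a n ∈ p
          · rw [if_pos hmemp, Finset.card_insert_of_notMem (by simp)]
            have hlt : W n < W (n + 1) := by
              rw [SetLike.lt_iff_le_and_exists]
              refine ⟨inf_le_inf_right p (hmono (Nat.le_succ n)), a n, ?_, ?_⟩
              · exact Submodule.mem_inf.2 ⟨hmem n, hmemp⟩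
              · intro hc
                exact hnot n (Submodule.mem_inf.1 hc).1
            have := Submodule.finrank_lt_finrank_of_lt hlt
            omega
          · rw [if_neg hmemp]
            exact ih.trans (Submodule.finrank_mono (inf_le_inf_right p (hmono (Nat.le_succ n))))
    obtain ⟨t, htsub, htcard⟩ := hinf.exists_subset_card_eq (Module.finrank B p + 1)
    have hN : ∀ k ∈ t, k ∈ (Finset.range (t.sup id + 1)).filter (fun k => a k ∈ p) := by
      intro k hk
      refine Finset.mem_filter.2 ⟨Finset.mem_range.2 ?_, htsub hk⟩
      exact Nat.lt_succ_of_le (Finset.le_sup (f := id) hk)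
    have h1 : Module.finrank B p + 1 ≤ Module.finrank B (W (t.sup id + 1)) :=
      htcard ▸ (Finset.card_le_card (fun k hk => hN k hk)).trans (hcard _)
    have h2 : Module.finrank B (W (t.sup id + 1)) ≤ Module.finrank B p :=
      Submodule.finrank_mono inf_le_right
    omega
  -- every subset of the range of `a` is closed
  have hSsub : ∀ T ⊆ Set.range a, @IsClosed M (indLimTopology B M) T := by
    intro T hT
    apply aux_closed_of_fd_finite
    intro p hp
    refine Set.Finite.subset (((hfin p hp).image a).preimage
      (Set.injOn_of_injective Subtype.val_injective)) ?_
    rintro ⟨m, hmp⟩ hmT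
    obtain ⟨n, rfl⟩ := hT hmT
    exact ⟨n, hmp, rfl⟩
  letI τM : TopologicalSpace M := indLimTopology B M
  have himg : IsCompact (f '' Set.univ) := (isCompact_univ).image hf
  have hsub : Set.range a ⊆ f '' Set.univ := by
    rintro _ ⟨n, rfl⟩
    exact ⟨pick (g n).1 (g n).2, trivial, rfl⟩
  have hcS : IsCompact (Set.range a) :=
    himg.of_isClosed_subset (hSsub _ subset_rfl) hsub
  have hopen : ∀ m : ℕ, IsOpen ((Set.range a \ {a m})ᶜ) := fun m =>
    (hSsub _ Set.diff_subset).isOpen_compl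
  have hcover : Set.range a ⊆ ⋃ m, (Set.range a \ {a m})ᶜ := by
    rintro _ ⟨n, rfl⟩
    exact Set.mem_iUnion.2 ⟨n, by simp⟩
  obtain ⟨t, ht⟩ := hcS.elim_finite_subcover _ hopen hcover
  obtain ⟨m', hm'⟩ := Infinite.exists_notMem_finset t
  have h3 := ht ⟨m', rfl⟩
  rw [Set.mem_iUnion₂] at h3
  obtain ⟨m, hmt, hmem'⟩ := h3
  rw [Set.mem_compl_iff, Set.mem_diff, not_and, not_not] at hmem'
  have : a m' = a m := hmem' ⟨m', rfl⟩
  exact hm' (hainj this ▸ hmt)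

end Aux3

section Aux4
variable {B : Type*} [Field B] [TopologicalSpace B] [IsTopologicalRing B] [T2Space B]
variable {M N : Type*} [AddCommGroup M] [Module B M] [AddCommGroup N] [Module B N]
variable {X : Type*} [TopologicalSpace X] [CompactSpace X]

theorem aux_comp_blinear_continuous (φ : M →ₗ[B] N) {f : X → M}
    (hf : @Continuous X M _ (indLimTopology B M) f) :
    @Continuous X N _ (indLimTopology B N) (fun x => φ (f x)) := by
  obtain ⟨p, hp, hmem⟩ := aux_range_fd hf
  haveI := hp
  let q := p.map φ
  let ψ : p →ₗ[B] q := φ.restrict (fun m hm => Submodule.mem_map_of_mem hm)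
  letI : TopologicalSpace p := canonicalFDTopology B p
  letI : TopologicalSpace q := canonicalFDTopology B q
  letI : TopologicalSpace N := indLimTopology B N
  have h1 : Continuous (fun x => (⟨f x, hmem x⟩ : p)) :=
    aux_corestrict_continuous hf p hmem
  have h2 : Continuous ψ := aux_fd_continuous ψ
  have h3 : Continuous (Subtype.val : q → N) := aux_incl_continuous q
  have key : (fun x => φ (f x)) = Subtype.val ∘ ⇑ψ ∘ (fun x => (⟨f x, hmem x⟩ : p)) := rfl
  rw [key]
  exact h3.comp (h2.comp h1)

theorem aux_add_continuous {f g : X → M}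
    (hf : @Continuous X M _ (indLimTopology B M) f)
    (hg : @Continuous X M _ (indLimTopology B M) g) :
    @Continuous X M _ (indLimTopology B M) (fun x => f x + g x) := by
  obtain ⟨p, hp, hmemf⟩ := aux_range_fd hf
  obtain ⟨q, hq, hmemg⟩ := aux_range_fd hg
  haveI := hp; haveI := hq
  haveI : FiniteDimensional B (p ⊔ q : Submodule B M) := Submodule.finiteDimensional_sup p q
  have hmf : ∀ x, f x ∈ p ⊔ q := fun x => Submodule.mem_sup_left (hmemf x)
  have hmg : ∀ x, g x ∈ p ⊔ q := fun x => Submodule.mem_sup_right (hmemg x)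
  letI : TopologicalSpace (p ⊔ q : Submodule B M) := canonicalFDTopology B (p ⊔ q : Submodule B M)
  letI : TopologicalSpace M := indLimTopology B M
  have h1 : Continuous (fun x => (⟨f x, hmf x⟩ : (p ⊔ q : Submodule B M))) :=
    aux_corestrict_continuous hf _ hmf
  have h2 : Continuous (fun x => (⟨g x, hmg x⟩ : (p ⊔ q : Submodule B M))) :=
    aux_corestrict_continuous hg _ hmg
  have hadd : Continuous (fun z : (p ⊔ q : Submodule B M) × (p ⊔ q : Submodule B M) =>
      z.1 + z.2) := aux_fd_add_continuous
  have h3 : Continuous (Subtype.val : (p ⊔ q : Submodule B M) → M) := aux_incl_continuous _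
  have key : (fun x => f x + g x) =
      Subtype.val ∘ ((fun z : (p ⊔ q : Submodule B M) × (p ⊔ q : Submodule B M) => z.1 + z.2) ∘
        (fun x => (⟨f x, hmf x⟩, ⟨g x, hmg x⟩))) := rfl
  rw [key]
  exact h3.comp (hadd.comp (h1.prodMk h2))

theorem aux_smul_continuous (b : B) {f : X → M}
    (hf : @Continuous X M _ (indLimTopology B M) f) :
    @Continuous X M _ (indLimTopology B M) (fun x => b • f x) :=
  aux_comp_blinear_continuous (LinearMap.lsmul B M b) hf

end Aux4

set_option maxHeartbeats 1000000 in
set_option synthInstance.maxHeartbeats 200000 in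
/-- Let `G` be a compact topological group, `B` a complete
Hausdorff topological field of characteristic zero containing `K`, `V` a
finite-dimensional `K`-vector space, `R` a `K`-algebra, `n ≥ 0`.  Give
`V(B) = B ⊗ V` and `V(B ⊗ R) = B ⊗ (V ⊗ R)` the inductive limit topology as
`B`-vector spaces.  Then the natural map
`Cⁿ(G, V ⊗ B) ⊗_K R → Cⁿ(G, V ⊗ B ⊗ R)` from continuous cochains tensored with
`R` to continuous cochains with values in `V ⊗ B ⊗ R` is a bijection: it is
injective on the span of the pure tensors `c ⊗ r` with `c` continuous, and the
image of that span is exactly the set of continuous cochains. -/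
theorem continuous_cochains_base_change
    {K B : Type*} [Field K] [Field B] [Algebra K B] [UniformSpace B] [CompleteSpace B]
    [T2Space B] [IsTopologicalRing B] [CharZero B]
    {G : Type*} [Group G] [TopologicalSpace G] [IsTopologicalGroup G] [CompactSpace G]
    (V : Type*) [AddCommGroup V] [Module K V] [FiniteDimensional K V]
    (R : Type*) [CommRing R] [Algebra K R] (n : ℕ) :
    ∀ Φ : (((Fin n → G) → B ⊗[K] V) ⊗[K] R) →ₗ[K] ((Fin n → G) → B ⊗[K] (V ⊗[K] R)),
      Φ = pointwiseTensorMap K (Fin n → G)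
            (LinearMap.compr₂ (TensorProduct.mk K (B ⊗[K] V) R)
              (TensorProduct.assoc K B V R).toLinearMap) →
      Set.InjOn Φ
        (Submodule.span K {t : ((Fin n → G) → B ⊗[K] V) ⊗[K] R |
          ∃ c : (Fin n → G) → B ⊗[K] V, ∃ r : R,
            (@Continuous _ _ Pi.topologicalSpace (indLimTopology B (B ⊗[K] V)) c) ∧
            t = c ⊗ₜ[K] r} : Set _) ∧
      Φ '' (Submodule.span K {t : ((Fin n → G) → B ⊗[K] V) ⊗[K] R |
          ∃ c : (Fin n → G) → B ⊗[K] V, ∃ r : R,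
            (@Continuous _ _ Pi.topologicalSpace (indLimTopology B (B ⊗[K] V)) c) ∧
            t = c ⊗ₜ[K] r} : Set _)
        = {f : (Fin n → G) → B ⊗[K] (V ⊗[K] R) |
            @Continuous _ _ Pi.topologicalSpace (indLimTopology B (B ⊗[K] (V ⊗[K] R))) f} := by
  classical
  intro Φ hΦ
  let X : Type _ := Fin n → G
  let ι := Module.Basis.ofVectorSpaceIndex K R
  let br : Module.Basis ι K R := Module.Basis.ofVectorSpace K R
  let A := TensorProduct.assoc K B V R
  let E0 : (B ⊗[K] V) ⊗[K] R ≃ₗ[K] (ι →₀ (B ⊗[K] V)) :=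
    TensorProduct.equivFinsuppOfBasisRight br
  let E : B ⊗[K] (V ⊗[K] R) ≃ₗ[K] (ι →₀ (B ⊗[K] V)) := A.symm ≪≫ₗ E0
  let F : ((X → B ⊗[K] V) ⊗[K] R) ≃ₗ[K] (ι →₀ (X → B ⊗[K] V)) :=
    TensorProduct.equivFinsuppOfBasisRight br
  -- pointwise formula for Φ on pure tensors
  have hΦtmul : ∀ (c : X → B ⊗[K] V) (r : R) (x : X), Φ (c ⊗ₜ[K] r) x = A (c x ⊗ₜ[K] r) := by
    intro c r x
    rw [hΦ]
    simp [pointwiseTensorMap, A]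
  -- B-compatibility of A
  have hA_smul : ∀ (b : B) (z : (B ⊗[K] V) ⊗[K] R), A (b • z) = b • A z := by
    intro b z
    induction z using TensorProduct.induction_on with
    | zero => simp
    | add z z' h h' => rw [smul_add, map_add, h, h', map_add, smul_add]
    | tmul m r =>
        rw [TensorProduct.smul_tmul']
        induction m using TensorProduct.induction_on with
        | zero => simp
        | add m m' h h' =>
            rw [smul_add, TensorProduct.add_tmul, map_add, h, h',
              TensorProduct.add_tmul, map_add, smul_add]
        | tmul b' v =>
            rw [TensorProduct.smul_tmul']
            simp only [smul_eq_mul, TensorProduct.assoc_tmul, A]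
            rw [TensorProduct.smul_tmul']
            rfl
  -- B-compatibility of E0 and E
  have hE0_smul : ∀ (b : B) (z : (B ⊗[K] V) ⊗[K] R), E0 (b • z) = b • E0 z := by
    intro b z
    induction z using TensorProduct.induction_on with
    | zero => simp
    | add z z' h h' => rw [smul_add, map_add, h, h', map_add, smul_add]
    | tmul m r =>
        rw [TensorProduct.smul_tmul']
        ext i
        rw [TensorProduct.equivFinsuppOfBasisRight_apply_tmul_apply, Finsupp.smul_apply,
          TensorProduct.equivFinsuppOfBasisRight_apply_tmul_apply]
        exact smul_comm _ _ _
  have hE_smul : ∀ (b : B) (z : B ⊗[K] (V ⊗[K] R)), E (b • z) = b • E z := by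
    intro b z
    have hz : z = A (A.symm z) := (A.apply_symm_apply z).symm
    have hAsymm : A.symm (b • z) = b • A.symm z := by
      apply A.injective
      rw [A.apply_symm_apply, hA_smul, A.apply_symm_apply]
    show E0 (A.symm (b • z)) = b • E0 (A.symm z)
    rw [hAsymm, hE0_smul]
  -- key compatibility between Φ and the finsupp descriptions
  have keyEF : ∀ (t : (X → B ⊗[K] V) ⊗[K] R) (x : X) (i : ι), E (Φ t x) i = F t i x := by
    intro t
    induction t using TensorProduct.induction_on with
    | zero =>
        intro x i
        rw [map_zero Φ, map_zero F]
        simp only [Pi.zero_apply, map_zero, Finsupp.zero_apply]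
    | add t t' h h' =>
        intro x i
        rw [map_add]
        simp only [Pi.add_apply, map_add, Finsupp.add_apply]
        rw [h, h']
    | tmul c r =>
        intro x i
        rw [hΦtmul]
        have h1 : E (A (c x ⊗ₜ[K] r)) = E0 (c x ⊗ₜ[K] r) := by
          show E0 (A.symm (A _)) = _
          rw [A.symm_apply_apply]
        rw [h1, TensorProduct.equivFinsuppOfBasisRight_apply_tmul_apply]
        have h2 : F (c ⊗ₜ[K] r) i = br.repr r i • c :=
          TensorProduct.equivFinsuppOfBasisRight_apply_tmul_apply br c r i
        rw [h2, Pi.smul_apply]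
  
  -- injectivity
  have hinj : Function.Injective Φ := by
    intro t t' h
    have h0 : Φ (t - t') = 0 := by rw [map_sub, h, sub_self]
    have hF : F (t - t') = 0 := by
      ext i x
      rw [← keyEF (t - t') x i, h0]
      simp only [Pi.zero_apply, map_zero, Finsupp.zero_apply]
    have := F.map_eq_zero_iff.mp hF
    exact sub_eq_zero.mp this
  refine ⟨Function.Injective.injOn hinj, ?_⟩
  apply Set.eq_of_subset_of_subset
  · rintro _ ⟨t, ht, rfl⟩
    show @Continuous _ _ Pi.topologicalSpace (indLimTopology B (B ⊗[K] (V ⊗[K] R))) (Φ t)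
    induction ht using Submodule.span_induction with
    | mem t htmem =>
        obtain ⟨c, r, hc, rfl⟩ := htmem
        let Lr : (B ⊗[K] V) →ₗ[B] B ⊗[K] (V ⊗[K] R) :=
          { toFun := fun m => A (m ⊗ₜ[K] r)
            map_add' := by intro m m'; rw [TensorProduct.add_tmul, map_add]
            map_smul' := by
              intro b m
              rw [RingHom.id_apply, ← TensorProduct.smul_tmul', hA_smul]
            }
        have hkey : Φ (c ⊗ₜ[K] r) = fun x => Lr (c x) := funext fun x => hΦtmul c r x
        rw [hkey]
        exact aux_comp_blinear_continuous Lr hc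
    | zero =>
        rw [map_zero]
        exact @continuous_const _ _ _ (indLimTopology B (B ⊗[K] (V ⊗[K] R))) 0
    | add t t' _ _ h h' =>
        rw [map_add]
        exact aux_add_continuous h h'
    | smul a t _ h =>
        rw [map_smul]
        have hkey : (a • Φ t) = fun x => (algebraMap K B a) • (Φ t x) := by
          funext x
          rw [Pi.smul_apply, algebraMap_smul]
        rw [hkey]
        exact aux_smul_continuous _ h
  · intro f hf
    replace hf : @Continuous _ _ Pi.topologicalSpace
        (indLimTopology B (B ⊗[K] (V ⊗[K] R))) f := hf
    obtain ⟨p, hp, hmem⟩ := aux_range_fd hf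
    haveI := hp
    let P : ι → (B ⊗[K] (V ⊗[K] R)) →ₗ[B] (B ⊗[K] V) := fun i =>
      { toFun := fun m => E m i
        map_add' := by intro m m'; rw [map_add, Finsupp.add_apply]
        map_smul' := by
          intro b m
          rw [RingHom.id_apply, hE_smul, Finsupp.smul_apply] }
    obtain ⟨S, hSspan⟩ := (Submodule.fg_top p).mp (Module.finite_def.mp hp)
    let s : Finset ι := S.sup fun m => (E m).support
    have hsupp : ∀ m ∈ p, ∀ i ∉ s, E m i = 0 := by
      intro m hm
      rw [← hSspan] at hm
      induction hm using Submodule.span_induction with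
      | mem m hmS =>
          intro i hi
          by_contra hne
          exact hi (Finset.le_sup (f := fun m => (E m).support)
            (Finset.mem_coe.mp hmS) (Finsupp.mem_support_iff.mpr hne))
      | zero => intro i _; rw [map_zero, Finsupp.zero_apply]
      | add m m' _ _ h h' =>
          intro i hi
          rw [map_add, Finsupp.add_apply, h i hi, h' i hi, add_zero]
      | smul b m _ h =>
          intro i hi
          rw [hE_smul, Finsupp.smul_apply, h i hi, smul_zero]
    let c : ι → X → B ⊗[K] V := fun i x => P i (f x)
    have hc : ∀ i : ι, @Continuous _ _ Pi.topologicalSpace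
        (indLimTopology B (B ⊗[K] V)) (c i) := fun i =>
      aux_comp_blinear_continuous (P i) hf
    refine ⟨∑ i ∈ s, (c i) ⊗ₜ[K] (br i : R), ?_, ?_⟩
    · exact Submodule.sum_mem _ fun i _ => Submodule.subset_span ⟨c i, br i, hc i, rfl⟩
    · funext x
      have h1 : Φ (∑ i ∈ s, (c i) ⊗ₜ[K] (br i : R)) x
          = ∑ i ∈ s, A (c i x ⊗ₜ[K] (br i : R)) := by
        rw [map_sum, Finset.sum_apply]
        exact Finset.sum_congr rfl fun i _ => hΦtmul (c i) (br i) x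
      apply E.injective
      rw [h1, map_sum]
      have h2 : ∀ i : ι, E (A (c i x ⊗ₜ[K] (br i : R))) = Finsupp.single i (c i x) := by
        intro i
        have hEA : E (A (c i x ⊗ₜ[K] (br i : R))) = E0 (c i x ⊗ₜ[K] (br i : R)) := by
          show E0 (A.symm (A _)) = _
          rw [A.symm_apply_apply]
        rw [hEA]
        ext j
        rw [TensorProduct.equivFinsuppOfBasisRight_apply_tmul_apply, Module.Basis.repr_self,
          Finsupp.single_apply, Finsupp.single_apply]
        split_ifs with hij
        · rw [one_smul]
        · rw [zero_smul]
      rw [Finset.sum_congr rfl fun i _ => h2 i]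
      show ∑ i ∈ s, Finsupp.single i (E (f x) i) = E (f x)
      have hss : (E (f x)).support ⊆ s := by
        intro i hi
        by_contra his
        exact (Finsupp.mem_support_iff.mp hi) (hsupp (f x) (hmem x) i his)
      rw [← Finsupp.sum_of_support_subset (E (f x)) hss (fun i m => Finsupp.single i m)
        (fun i _ => Finsupp.single_zero i)]
      exact Finsupp.sum_single (E (f x))
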